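/- If ψ(x,y,z,z̄) satisfies ψ_x = v where v = ln(x+b) + ln(x+b̄) − 2·ln(z+z̄), i.e. ψ = (x+b)·ln(x+b) + (x+b̄)·ln(x+b̄) − 2x·(ln(z+z̄)+1) + F(z,z̄,y), then ψ satisfies the equation ψ_{z z̄} = e^{ψ_x}·ψ_{xx} if and only if F_{z z̄} = (b+b̄)/(z+z̄)². -/

import Mathlib

open Complex Filter Topology

-- derivative of t * log t
lemma aux_mul_log_hasDerivAt {u : ℂ} (hu : 0 < u.re) :
    HasDerivAt (fun t : ℂ => t * Complex.log t) (Complex.log u + 1) u := by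
  have hu0 : u ≠ 0 := fun h => by simp [h] at hu
  have h := (hasDerivAt_id u).mul (Complex.hasDerivAt_log (Or.inl hu))
  exact h.congr_deriv (by simp [hu0])

-- conj ∘ f ∘ conj is holomorphic
lemma aux_conj_conj_hasDerivAt {f : ℂ → ℂ} (hf : Differentiable ℂ f) (w : ℂ) :
    HasDerivAt (fun w' => (starRingEnd ℂ) (f ((starRingEnd ℂ) w')))
      ((starRingEnd ℂ) (deriv f ((starRingEnd ℂ) w))) w := by
  rw [hasDerivAt_iff_tendsto_slope]
  have h := (hf ((starRingEnd ℂ) w)).hasDerivAt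
  rw [hasDerivAt_iff_tendsto_slope] at h
  have hconj : Tendsto (starRingEnd ℂ) (𝓝[≠] w) (𝓝[≠] ((starRingEnd ℂ) w)) := by
    apply tendsto_nhdsWithin_of_tendsto_nhds_of_eventually_within
    · exact (Complex.continuous_conj.continuousAt).mono_left nhdsWithin_le_nhds
    · filter_upwards [self_mem_nhdsWithin] with a ha
      simp only [Set.mem_compl_iff, Set.mem_singleton_iff] at ha ⊢
      exact fun hc => ha (by simpa using congrArg (starRingEnd ℂ) hc)
  have h2 := ((Complex.continuous_conj.tendsto _).comp (h.comp hconj))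
  refine h2.congr (fun w' => ?_)
  simp only [Function.comp, slope, vsub_eq_sub, smul_eq_mul, map_mul, map_inv₀, map_sub,
    Complex.conj_conj]

theorem potential_boyer_finley_iff_F
    (b bb : ℂ → ℝ → ℂ)
    (hb : ∀ y, Differentiable ℂ (fun z => b z y))
    (hbb : ∀ (w : ℂ) (y : ℝ), bb w y = (starRingEnd ℂ) (b ((starRingEnd ℂ) w) y))
    (F : ℂ → ℂ → ℝ → ℂ)
    (hF1 : ∀ (y : ℝ) (z : ℂ), Differentiable ℂ (fun w => F z w y))
    (hF2 : ∀ (y : ℝ) (w : ℂ), Differentiable ℂ (fun z => deriv (fun w' => F z w' y) w))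
    (ψ : ℝ → ℝ → ℂ → ℂ → ℂ)
    (hψ : ∀ (x y : ℝ) (z w : ℂ), ψ x y z w =
      ((x : ℂ) + b z y) * Complex.log ((x : ℂ) + b z y)
      + ((x : ℂ) + bb w y) * Complex.log ((x : ℂ) + bb w y)
      - 2 * (x : ℂ) * (Complex.log (z + w) + 1) + F z w y) :
    ∀ (x y : ℝ) (z w : ℂ),
      0 < ((x : ℂ) + b z y).re → 0 < ((x : ℂ) + bb w y).re → 0 < (z + w).re →
      ( -- ψ_{z z̄} = e^{ψ_x} ψ_{xx}
        deriv (fun z' => deriv (fun w' => ψ x y z' w') w) z =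
          Complex.exp (deriv (fun x' : ℝ => ψ x' y z w) x) *
            deriv (fun x' : ℝ => deriv (fun x'' : ℝ => ψ x'' y z w) x') x
        ↔
        -- F_{z z̄} = (b+b̄)/(z+z̄)²
        deriv (fun z' => deriv (fun w' => F z' w' y) w) z =
          (b z y + bb w y) / (z + w) ^ 2 ) := by
  intro x y z w h1 h2 h3
  set B := b z y with hBdef
  set C := bb w y with hCdef
  have hXB0 : (x:ℂ) + B ≠ 0 := fun h => by rw [h] at h1; simp at h1
  have hXC0 : (x:ℂ) + C ≠ 0 := fun h => by rw [h] at h2; simp at h2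
  have hS0 : z + w ≠ 0 := fun h => by rw [h] at h3; simp at h3
  set L := Complex.log (z + w) with hL
  -- first x-derivative
  have key : ∀ x' : ℝ, 0 < ((x':ℂ) + B).re → 0 < ((x':ℂ) + C).re →
      deriv (fun x'' : ℝ => ψ x'' y z w) x'
        = Complex.log ((x':ℂ) + B) + Complex.log ((x':ℂ) + C) - 2 * L := by
    intro x' hx1 hx2
    have hfun : (fun x'' : ℝ => ψ x'' y z w)
        = fun x'' : ℝ => ((x'':ℂ) + B) * Complex.log ((x'':ℂ) + B)
          + ((x'':ℂ) + C) * Complex.log ((x'':ℂ) + C)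
          - 2 * (x'':ℂ) * (L + 1) + F z w y := funext fun x'' => hψ x'' y z w
    rw [hfun]
    have hb1 : HasDerivAt (fun ξ : ℂ => (ξ + B) * Complex.log (ξ + B))
        (Complex.log ((x':ℂ) + B) + 1) ((x':ℂ)) := by
      simpa [Function.comp_def] using (aux_mul_log_hasDerivAt hx1).comp ((x':ℂ)) ((hasDerivAt_id _).add_const B)
    have hb2 : HasDerivAt (fun ξ : ℂ => (ξ + C) * Complex.log (ξ + C))
        (Complex.log ((x':ℂ) + C) + 1) ((x':ℂ)) := by
      simpa [Function.comp_def] using (aux_mul_log_hasDerivAt hx2).comp ((x':ℂ)) ((hasDerivAt_id _).add_const C)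
    have hlin : HasDerivAt (fun ξ : ℂ => 2 * ξ * (L + 1)) (2 * (L + 1)) ((x':ℂ)) := by
      simpa using ((hasDerivAt_id ((x':ℂ))).const_mul 2).mul_const (L + 1)
    have h := (((hb1.add hb2).sub hlin).add_const (F z w y)).comp_ofReal
    exact h.deriv.trans (by ring)
  have hψx : deriv (fun x' : ℝ => ψ x' y z w) x
      = Complex.log ((x:ℂ) + B) + Complex.log ((x:ℂ) + C) - 2 * L := key x h1 h2
  -- second x-derivative
  have h1' : -B.re < x := by
    have := h1; simp only [Complex.add_re, Complex.ofReal_re] at this; linarith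
  have h2' : -C.re < x := by
    have := h2; simp only [Complex.add_re, Complex.ofReal_re] at this; linarith
  have hψxx : deriv (fun x' : ℝ => deriv (fun x'' : ℝ => ψ x'' y z w) x') x
      = ((x:ℂ) + B)⁻¹ + ((x:ℂ) + C)⁻¹ := by
    have hev : (fun x' : ℝ => deriv (fun x'' : ℝ => ψ x'' y z w) x')
        =ᶠ[𝓝 x] fun x' : ℝ =>
          Complex.log ((x':ℂ) + B) + Complex.log ((x':ℂ) + C) - 2 * L := by
      filter_upwards [eventually_gt_nhds h1', eventually_gt_nhds h2'] with x' hx1 hx2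
      exact key x'
        (by simp only [Complex.add_re, Complex.ofReal_re]; linarith)
        (by simp only [Complex.add_re, Complex.ofReal_re]; linarith)
    rw [hev.deriv_eq]
    have hl1 : HasDerivAt (fun ξ : ℂ => Complex.log (ξ + B)) ((x:ℂ) + B)⁻¹ ((x:ℂ)) := by
      simpa [Function.comp_def] using (Complex.hasDerivAt_log (Or.inl h1)).comp ((x:ℂ)) ((hasDerivAt_id _).add_const B)
    have hl2 : HasDerivAt (fun ξ : ℂ => Complex.log (ξ + C)) ((x:ℂ) + C)⁻¹ ((x:ℂ)) := by
      simpa [Function.comp_def] using (Complex.hasDerivAt_log (Or.inl h2)).comp ((x:ℂ)) ((hasDerivAt_id _).add_const C)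
    exact (((hl1.add hl2).sub_const (2 * L)).comp_ofReal).deriv
  -- w-derivative of the bb term
  have hbbw : HasDerivAt (fun w' : ℂ => bb w' y)
      ((starRingEnd ℂ) (deriv (fun z => b z y) ((starRingEnd ℂ) w))) w := by
    have hfun : (fun w' : ℂ => bb w' y)
        = fun w' => (starRingEnd ℂ) ((fun z => b z y) ((starRingEnd ℂ) w')) :=
      funext fun w' => hbb w' y
    rw [hfun]; exact aux_conj_conj_hasDerivAt (hb y) w
  have hg : HasDerivAt (fun w' : ℂ => ((x:ℂ) + bb w' y) * Complex.log ((x:ℂ) + bb w' y))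
      ((Complex.log ((x:ℂ) + C) + 1) *
        ((starRingEnd ℂ) (deriv (fun z => b z y) ((starRingEnd ℂ) w)))) w := by
    simpa [Function.comp_def] using (aux_mul_log_hasDerivAt h2).comp w (hbbw.const_add ((x:ℂ)))
  set GC := (Complex.log ((x:ℂ) + C) + 1) *
      ((starRingEnd ℂ) (deriv (fun z => b z y) ((starRingEnd ℂ) w))) with hGC
  -- w-derivative of ψ for z' near z
  have key2 : ∀ z' : ℂ, 0 < (z' + w).re →
      deriv (fun w' => ψ x y z' w') w
        = GC - 2 * (x:ℂ) * (z' + w)⁻¹ + deriv (fun w' => F z' w' y) w := by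
    intro z' hz'
    have hfun : (fun w' : ℂ => ψ x y z' w')
        = fun w' : ℂ => ((x:ℂ) + b z' y) * Complex.log ((x:ℂ) + b z' y)
          + ((x:ℂ) + bb w' y) * Complex.log ((x:ℂ) + bb w' y)
          - 2 * (x:ℂ) * (Complex.log (z' + w') + 1) + F z' w' y :=
      funext fun w' => hψ x y z' w'
    rw [hfun]
    have hlog : HasDerivAt (fun w' : ℂ => Complex.log (z' + w')) (z' + w)⁻¹ w := by
      simpa [Function.comp_def] using (Complex.hasDerivAt_log (Or.inl hz')).comp w ((hasDerivAt_id w).const_add z')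
    have hh : HasDerivAt (fun w' : ℂ => 2 * (x:ℂ) * (Complex.log (z' + w') + 1))
        (2 * (x:ℂ) * (z' + w)⁻¹) w := (hlog.add_const 1).const_mul (2 * (x:ℂ))
    have hFw : HasDerivAt (fun w' : ℂ => F z' w' y) (deriv (fun w' => F z' w' y) w) w :=
      (hF1 y z' w).hasDerivAt
    exact (((hg.const_add (((x:ℂ) + b z' y) * Complex.log ((x:ℂ) + b z' y))).sub hh).add
      hFw).deriv
  -- z-derivative
  have hmem : {z' : ℂ | 0 < (z' + w).re} ∈ 𝓝 z := by
    have hc : ContinuousAt (fun z' : ℂ => (z' + w).re) z :=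
      (Complex.continuous_re.comp (continuous_id.add continuous_const)).continuousAt
    exact hc (Ioi_mem_nhds h3)
  have hev2 : (fun z' : ℂ => deriv (fun w' => ψ x y z' w') w)
      =ᶠ[𝓝 z] fun z' : ℂ => GC - 2 * (x:ℂ) * (z' + w)⁻¹ + deriv (fun w' => F z' w' y) w :=
    eventually_of_mem hmem fun z' hz' => key2 z' hz'
  have hinv : HasDerivAt (fun z' : ℂ => (z' + w)⁻¹) (-(((z + w) ^ 2)⁻¹)) z := by
    simpa [Function.comp_def] using (hasDerivAt_inv hS0).comp z ((hasDerivAt_id z).add_const w)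
  have hterm : HasDerivAt (fun z' : ℂ => GC - 2 * (x:ℂ) * (z' + w)⁻¹)
      (2 * (x:ℂ) * (((z + w) ^ 2)⁻¹)) z := by
    have h := (hinv.const_mul (2 * (x:ℂ))).const_sub GC
    exact h.congr_deriv (by ring)
  have hFz : HasDerivAt (fun z' : ℂ => deriv (fun w' => F z' w' y) w)
      (deriv (fun z' => deriv (fun w' => F z' w' y) w) z) z := (hF2 y w z).hasDerivAt
  have hLHS : deriv (fun z' => deriv (fun w' => ψ x y z' w') w) z
      = 2 * (x:ℂ) * (((z + w) ^ 2)⁻¹)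
        + deriv (fun z' => deriv (fun w' => F z' w' y) w) z := by
    rw [hev2.deriv_eq]; exact (hterm.add hFz).deriv
  rw [hLHS, hψx, hψxx]
  have hexp : Complex.exp (Complex.log ((x:ℂ) + B) + Complex.log ((x:ℂ) + C) - 2 * L)
      = ((x:ℂ) + B) * ((x:ℂ) + C) / ((z + w) * (z + w)) := by
    rw [two_mul, Complex.exp_sub, Complex.exp_add, Complex.exp_add,
      Complex.exp_log hXB0, Complex.exp_log hXC0, hL, Complex.exp_log hS0]
  rw [hexp]
  have hprod : ((x:ℂ) + B) * ((x:ℂ) + C) / ((z + w) * (z + w))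
      * (((x:ℂ) + B)⁻¹ + ((x:ℂ) + C)⁻¹) = (2 * (x:ℂ) + B + C) / (z + w) ^ 2 := by
    field_simp; ring
  rw [hprod]
  constructor
  · intro h; linear_combination h
  · intro h; linear_combination h
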